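/- Let ℋ be a class of finite simple graphs with unbounded weak vertex-cover number, i.e., for every c ∈ ℕ there is H ∈ ℋ whose weak vertex-cover number exceeds c. Then at least one of the following six alternatives holds: for every n ∈ ℕ some H ∈ ℋ contains the clique K_n as an induced subgraph; or for every n some H ∈ ℋ contains the biclique K_{n,n} as an induced subgraph; or for every n some H ∈ ℋ contains the subdivided star SS_n as an induced subgraph; or for every n some H ∈ ℋ contains the windmill W_n as an induced subgraph; or for every n some H ∈ ℋ contains the triangle packing n·K₃ as an induced subgraph; or for every n some H ∈ ℋ contains the wedge packing n·P₂ as an induced subgraph. -/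

import Mathlib

open SimpleGraph

/-- `{u,v}` is an isolated edge of `H`: the connected component of `u` and `v` consists of
exactly this edge. -/
def IsolatedEdge {V : Type*} (H : SimpleGraph V) (u v : V) : Prop :=
  H.Adj u v ∧ (∀ w, H.Adj u w → w = v) ∧ (∀ w, H.Adj v w → w = u)

/-- The subdivided star `SS_n`: center `none`, edges `c x_i` and `x_i y_i`, where
`x_i = some (i,0)` and `y_i = some (i,1)`. -/
def subdividedStar (n : ℕ) : SimpleGraph (Option (Fin n × Fin 2)) :=
  SimpleGraph.fromRel (fun x y =>
    (∃ i, x = none ∧ y = some (i, 0)) ∨ (∃ i, x = some (i, 0) ∧ y = some (i, 1)))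

/-- The windmill `W_n`: a matching `x_i y_i` together with a center adjacent to everything. -/
def windmill (n : ℕ) : SimpleGraph (Option (Fin n × Fin 2)) :=
  SimpleGraph.fromRel (fun x y =>
    (x = none ∧ y ≠ none) ∨ (∃ i, x = some (i, 0) ∧ y = some (i, 1)))

/-- The triangle packing `n·K₃`: the disjoint union of `n` triangles. -/
def trianglePacking (n : ℕ) : SimpleGraph (Fin n × Fin 3) :=
  SimpleGraph.fromRel (fun x y => x.1 = y.1)

/-- The wedge packing `n·P₂`: the disjoint union of `n` paths with two edges. -/
def wedgePacking (n : ℕ) : SimpleGraph (Fin n × Fin 3) :=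
  SimpleGraph.fromRel (fun x y =>
    x.1 = y.1 ∧ ((x.2 = 0 ∧ y.2 = 1) ∨ (x.2 = 1 ∧ y.2 = 2)))

section Aux
open Finset


lemma ramsey_pair_aux : ∀ s : ℕ, ∀ a b : ℕ, a + b ≤ s → ∃ N : ℕ,
    ∀ {α : Type} [LinearOrder α] (S : Finset α) (f : α → α → Bool), N ≤ S.card →
      (∃ T ⊆ S, a ≤ T.card ∧ ∀ i ∈ T, ∀ j ∈ T, i < j → f i j = true) ∨
      (∃ T ⊆ S, b ≤ T.card ∧ ∀ i ∈ T, ∀ j ∈ T, i < j → f i j = false) := by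
  intro s
  induction s with
  | zero =>
    intro a b hab
    refine ⟨0, fun S f _ => Or.inl ⟨∅, empty_subset _, ?_, by simp⟩⟩
    simp; omega
  | succ s ih =>
    intro a b hab
    match a, b with
    | 0, b => exact ⟨0, fun S f _ => Or.inl ⟨∅, empty_subset _, by simp, by simp⟩⟩
    | a+1, 0 => exact ⟨0, fun S f _ => Or.inr ⟨∅, empty_subset _, by simp, by simp⟩⟩
    | a+1, b+1 =>
      obtain ⟨N₁, hN₁⟩ := ih a (b+1) (by omega)
      obtain ⟨N₂, hN₂⟩ := ih (a+1) b (by omega)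
      refine ⟨N₁ + N₂ + 1, ?_⟩
      intro α _ S f hS
      have hSne : S.Nonempty := card_pos.mp (by omega)
      set x := S.min' hSne with hx
      have hxS : x ∈ S := S.min'_mem hSne
      set S' := S.erase x with hS'
      have hcard : S'.card = S.card - 1 := card_erase_of_mem hxS
      have hsplit := card_filter_add_card_filter_not (s := S')
        (p := fun y => f x y = true)
      have : N₁ ≤ (S'.filter (fun y => f x y = true)).card ∨
          N₂ ≤ (S'.filter (fun y => ¬ (f x y = true))).card := by omega
      rcases this with h | h
      · rcases hN₁ _ f h with ⟨T, hT, hTc, hTm⟩ | ⟨T, hT, hTc, hTm⟩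
        · refine Or.inl ⟨insert x T, ?_, ?_, ?_⟩
          · exact insert_subset hxS (hT.trans ((filter_subset _ _).trans (erase_subset _ _)))
          · have hxT : x ∉ T := fun hxT => by
              have := (mem_erase.mp (filter_subset _ _ (hT hxT))).1; exact this rfl
            rw [card_insert_of_notMem hxT]; omega
          · intro i hi j hj hij
            rcases mem_insert.mp hi with rfl | hi
            · rcases mem_insert.mp hj with rfl | hj
              · exact absurd hij (lt_irrefl _)
              · exact (mem_filter.mp (hT hj)).2
            · rcases mem_insert.mp hj with rfl | hj
              · have hiS : i ∈ S := mem_of_mem_erase ((mem_filter.mp (hT hi)).1)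
                exact absurd (hij.trans_le (S.min'_le i hiS)) (lt_irrefl i)
              · exact hTm i hi j hj hij
        · exact Or.inr ⟨T, hT.trans ((filter_subset _ _).trans (erase_subset _ _)), hTc, hTm⟩
      · rcases hN₂ _ f h with ⟨T, hT, hTc, hTm⟩ | ⟨T, hT, hTc, hTm⟩
        · exact Or.inl ⟨T, hT.trans ((filter_subset _ _).trans (erase_subset _ _)), hTc, hTm⟩
        · refine Or.inr ⟨insert x T, ?_, ?_, ?_⟩
          · exact insert_subset hxS (hT.trans ((filter_subset _ _).trans (erase_subset _ _)))
          · have hxT : x ∉ T := fun hxT => by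
              have := (mem_erase.mp (filter_subset _ _ (hT hxT))).1; exact this rfl
            rw [card_insert_of_notMem hxT]; omega
          · intro i hi j hj hij
            rcases mem_insert.mp hi with rfl | hi
            · rcases mem_insert.mp hj with rfl | hj
              · exact absurd hij (lt_irrefl _)
              · exact Bool.not_eq_true _ |>.mp (mem_filter.mp (hT hj)).2
            · rcases mem_insert.mp hj with rfl | hj
              · have hiS : i ∈ S := mem_of_mem_erase ((mem_filter.mp (hT hi)).1)
                exact absurd (hij.trans_le (S.min'_le i hiS)) (lt_irrefl i)
              · exact hTm i hi j hj hij

lemma ramsey_fun : ∀ t n : ℕ, ∃ N : ℕ,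
    ∀ {α : Type} [LinearOrder α] (S : Finset α) (f : α → α → (Fin t → Bool)), N ≤ S.card →
      ∃ T ⊆ S, n ≤ T.card ∧ ∃ g : Fin t → Bool,
        ∀ i ∈ T, ∀ j ∈ T, i < j → f i j = g := by
  intro t
  induction t with
  | zero =>
    intro n
    exact ⟨n, fun S f hS => ⟨S, Finset.Subset.refl _, hS,
      fun _ => true, fun i _ j _ _ => funext fun k => k.elim0⟩⟩
  | succ t ih =>
    intro n
    obtain ⟨N', hN'⟩ := ih n
    obtain ⟨N, hN⟩ := ramsey_pair_aux (N' + N') N' N' le_rfl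
    refine ⟨N, ?_⟩
    intro α _ S f hS
    have h2 := hN S (fun i j => f i j 0) hS
    have key : ∃ b : Bool, ∃ T₁ ⊆ S, N' ≤ T₁.card ∧
        ∀ i ∈ T₁, ∀ j ∈ T₁, i < j → f i j 0 = b := by
      rcases h2 with ⟨T₁, h1, h2, h3⟩ | ⟨T₁, h1, h2, h3⟩
      exacts [⟨true, T₁, h1, h2, h3⟩, ⟨false, T₁, h1, h2, h3⟩]
    obtain ⟨b, T₁, hT₁S, hT₁c, hT₁m⟩ := key
    obtain ⟨T, hTT₁, hTc, g', hg'⟩ := hN' T₁ (fun i j k => f i j k.succ) hT₁c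
    refine ⟨T, hTT₁.trans hT₁S, hTc, Fin.cons b g', ?_⟩
    intro i hi j hj hij
    funext k
    induction k using Fin.cases with
    | zero => simpa using hT₁m i (hTT₁ hi) j (hTT₁ hj) hij
    | succ k => simpa using congrFun (hg' i hi j hj hij) k

noncomputable def RN (t n : ℕ) : ℕ := (ramsey_fun t n).choose
lemma RN_spec (t n : ℕ) : ∀ {α : Type} [LinearOrder α] (S : Finset α)
    (f : α → α → (Fin t → Bool)), RN t n ≤ S.card →
      ∃ T ⊆ S, n ≤ T.card ∧ ∃ g : Fin t → Bool,
        ∀ i ∈ T, ∀ j ∈ T, i < j → f i j = g := (ramsey_fun t n).choose_spec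

section Facts
variable {n : ℕ}

lemma SS_none_zero (j : Fin n) : (subdividedStar n).Adj none (some (j,0)) := by
  simp [subdividedStar, fromRel_adj]
lemma SS_none_one (j : Fin n) : ¬ (subdividedStar n).Adj none (some (j,1)) := by
  simp [subdividedStar, fromRel_adj]
lemma SS_zero_zero (i j : Fin n) : ¬ (subdividedStar n).Adj (some (i,0)) (some (j,0)) := by
  simp [subdividedStar, fromRel_adj]
lemma SS_zero_one (i j : Fin n) :
    (subdividedStar n).Adj (some (i,0)) (some (j,1)) ↔ i = j := by
  simp [subdividedStar, fromRel_adj, eq_comm]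
lemma SS_one_one (i j : Fin n) : ¬ (subdividedStar n).Adj (some (i,1)) (some (j,1)) := by
  simp [subdividedStar, fromRel_adj]

lemma WM_none_some (j : Fin n) (s : Fin 2) : (windmill n).Adj none (some (j,s)) := by
  simp [windmill, fromRel_adj]
lemma WM_zero_zero (i j : Fin n) : ¬ (windmill n).Adj (some (i,0)) (some (j,0)) := by
  simp [windmill, fromRel_adj]
lemma WM_zero_one (i j : Fin n) :
    (windmill n).Adj (some (i,0)) (some (j,1)) ↔ i = j := by
  simp [windmill, fromRel_adj, eq_comm]
lemma WM_one_one (i j : Fin n) : ¬ (windmill n).Adj (some (i,1)) (some (j,1)) := by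
  simp [windmill, fromRel_adj]

lemma TP_adj (p q : Fin n × Fin 3) :
    (trianglePacking n).Adj p q ↔ p ≠ q ∧ p.1 = q.1 := by
  simp [trianglePacking, fromRel_adj, eq_comm]

lemma WP_adj (i j : Fin n) (r s : Fin 3) :
    (wedgePacking n).Adj (i,r) (j,s) ↔ (i,r) ≠ (j,s) ∧ i = j ∧
      ((r = 0 ∧ s = 1) ∨ (r = 1 ∧ s = 2) ∨ (r = 1 ∧ s = 0) ∨ (r = 2 ∧ s = 1)) := by
  simp [wedgePacking, fromRel_adj, eq_comm]; tauto

end Facts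

section Builders
variable {V : Type*} {G : SimpleGraph V} {n : ℕ}

lemma clique_builder (f : Fin n → V) (hinj : Function.Injective f)
    (hadj : ∀ i j, i ≠ j → G.Adj (f i) (f j)) :
    Nonempty ((⊤ : SimpleGraph (Fin n)) ↪g G) := by
  refine ⟨⟨⟨f, hinj⟩, ?_⟩⟩
  intro i j
  simp only [Function.Embedding.coeFn_mk, top_adj]
  exact ⟨fun h hij => h.ne (congrArg f hij), hadj i j⟩

lemma biclique_builder (a b : Fin n → V)
    (hainj : Function.Injective a) (hbinj : Function.Injective b)
    (hd : ∀ i j, a i ≠ b j)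
    (hab : ∀ i j, G.Adj (a i) (b j))
    (ha : ∀ i j, ¬ G.Adj (a i) (a j)) (hb : ∀ i j, ¬ G.Adj (b i) (b j)) :
    Nonempty (completeBipartiteGraph (Fin n) (Fin n) ↪g G) := by
  have hinj : Function.Injective (Sum.elim a b) := by
    rintro (i | i) (j | j) h <;> simp only [Sum.elim_inl, Sum.elim_inr] at h
    · exact congrArg Sum.inl (hainj h)
    · exact absurd h (hd i j)
    · exact absurd h.symm (hd j i)
    · exact congrArg Sum.inr (hbinj h)
  refine ⟨⟨⟨Sum.elim a b, hinj⟩, ?_⟩⟩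
  rintro (i | i) (j | j) <;>
    simp only [Function.Embedding.coeFn_mk, Sum.elim_inl, Sum.elim_inr,
      completeBipartiteGraph_adj, Sum.isLeft_inl, Sum.isRight_inl, Sum.isLeft_inr,
      Sum.isRight_inr, true_and, and_true, false_and, and_false, or_false, false_or,
      or_self]
  · exact iff_of_false (ha i j) (by simp)
  · exact iff_of_true (hab i j) (by simp)
  · exact iff_of_true (hab j i).symm (by simp)
  · exact iff_of_false (hb i j) (by simp)

lemma fin2cases : ∀ r : Fin 2, r = 0 ∨ r = 1 := by decide

lemma subdividedStar_builder (c : V) (x y : Fin n → V)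
    (hxinj : Function.Injective x) (hyinj : Function.Injective y)
    (hxyne : ∀ i j, x i ≠ y j) (hcxne : ∀ i, c ≠ x i) (hcyne : ∀ i, c ≠ y i)
    (hcx : ∀ i, G.Adj c (x i)) (hxy : ∀ i, G.Adj (x i) (y i))
    (hcy : ∀ i, ¬ G.Adj c (y i))
    (hxx : ∀ i j, i ≠ j → ¬ G.Adj (x i) (x j))
    (hyy : ∀ i j, i ≠ j → ¬ G.Adj (y i) (y j))
    (hxyc : ∀ i j, i ≠ j → ¬ G.Adj (x i) (y j)) :
    Nonempty (subdividedStar n ↪g G) := by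
  set φ : Option (Fin n × Fin 2) → V :=
    fun o => o.elim c (fun p => if p.2 = 0 then x p.1 else y p.1) with hφ
  have hv0 : ∀ i : Fin n, φ (some (i, 0)) = x i := by intro i; simp [hφ]
  have hv1 : ∀ i : Fin n, φ (some (i, 1)) = y i := by intro i; simp [hφ]
  have hvn : φ none = c := rfl
  have key01 : ∀ i j, (G.Adj (x i) (y j) ↔ i = j) := by
    intro i j
    constructor
    · intro h; by_contra hne; exact hxyc i j hne h
    · rintro rfl; exact hxy i
  have hinj : Function.Injective φ := by
    rintro (_ | ⟨i, r⟩) (_ | ⟨j, s⟩) h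
    · rfl
    · rcases fin2cases s with rfl | rfl
      · rw [hvn, hv0] at h; exact absurd h (hcxne j)
      · rw [hvn, hv1] at h; exact absurd h (hcyne j)
    · rcases fin2cases r with rfl | rfl
      · rw [hvn, hv0] at h; exact absurd h.symm (hcxne i)
      · rw [hvn, hv1] at h; exact absurd h.symm (hcyne i)
    · rcases fin2cases r with rfl | rfl <;> rcases fin2cases s with rfl | rfl
      · rw [hv0, hv0] at h
        exact congrArg (fun i => some (i, (0 : Fin 2))) (hxinj h)
      · rw [hv0, hv1] at h; exact absurd h (hxyne i j)
      · rw [hv1, hv0] at h; exact absurd h.symm (hxyne j i)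
      · rw [hv1, hv1] at h
        exact congrArg (fun i => some (i, (1 : Fin 2))) (hyinj h)
  refine ⟨⟨⟨φ, hinj⟩, ?_⟩⟩
  rintro (_ | ⟨i, r⟩) (_ | ⟨j, s⟩) <;>
    simp only [Function.Embedding.coeFn_mk]
  · rw [hvn]; exact iff_of_false (G.irrefl) ((subdividedStar n).irrefl)
  · rcases fin2cases s with rfl | rfl
    · rw [hvn, hv0]; exact iff_of_true (hcx j) (SS_none_zero j)
    · rw [hvn, hv1]; exact iff_of_false (hcy j) (SS_none_one j)
  · rcases fin2cases r with rfl | rfl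
    · rw [hvn, hv0]
      exact iff_of_true (hcx i).symm (SS_none_zero i).symm
    · rw [hvn, hv1]
      exact iff_of_false (fun h => hcy i h.symm) (fun h => SS_none_one i h.symm)
  · rcases fin2cases r with rfl | rfl <;> rcases fin2cases s with rfl | rfl
    · rw [hv0, hv0]
      refine iff_of_false ?_ (SS_zero_zero i j)
      rcases eq_or_ne i j with rfl | hne
      · exact G.irrefl
      · exact hxx i j hne
    · rw [hv0, hv1, SS_zero_one]; exact key01 i j
    · rw [hv1, hv0, G.adj_comm, (subdividedStar n).adj_comm, SS_zero_one]
      exact key01 j i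
    · rw [hv1, hv1]
      refine iff_of_false ?_ (SS_one_one i j)
      rcases eq_or_ne i j with rfl | hne
      · exact G.irrefl
      · exact hyy i j hne

lemma windmill_builder (c : V) (x y : Fin n → V)
    (hxinj : Function.Injective x) (hyinj : Function.Injective y)
    (hxyne : ∀ i j, x i ≠ y j) (hcxne : ∀ i, c ≠ x i) (hcyne : ∀ i, c ≠ y i)
    (hcx : ∀ i, G.Adj c (x i)) (hcy : ∀ i, G.Adj c (y i)) (hxy : ∀ i, G.Adj (x i) (y i))
    (hxx : ∀ i j, i ≠ j → ¬ G.Adj (x i) (x j))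
    (hyy : ∀ i j, i ≠ j → ¬ G.Adj (y i) (y j))
    (hxyc : ∀ i j, i ≠ j → ¬ G.Adj (x i) (y j)) :
    Nonempty (windmill n ↪g G) := by
  set φ : Option (Fin n × Fin 2) → V :=
    fun o => o.elim c (fun p => if p.2 = 0 then x p.1 else y p.1) with hφ
  have hv0 : ∀ i : Fin n, φ (some (i, 0)) = x i := by intro i; simp [hφ]
  have hv1 : ∀ i : Fin n, φ (some (i, 1)) = y i := by intro i; simp [hφ]
  have hvn : φ none = c := rfl
  have key01 : ∀ i j, (G.Adj (x i) (y j) ↔ i = j) := by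
    intro i j
    constructor
    · intro h; by_contra hne; exact hxyc i j hne h
    · rintro rfl; exact hxy i
  have hinj : Function.Injective φ := by
    rintro (_ | ⟨i, r⟩) (_ | ⟨j, s⟩) h
    · rfl
    · rcases fin2cases s with rfl | rfl
      · rw [hvn, hv0] at h; exact absurd h (hcxne j)
      · rw [hvn, hv1] at h; exact absurd h (hcyne j)
    · rcases fin2cases r with rfl | rfl
      · rw [hvn, hv0] at h; exact absurd h.symm (hcxne i)
      · rw [hvn, hv1] at h; exact absurd h.symm (hcyne i)
    · rcases fin2cases r with rfl | rfl <;> rcases fin2cases s with rfl | rfl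
      · rw [hv0, hv0] at h
        exact congrArg (fun i => some (i, (0 : Fin 2))) (hxinj h)
      · rw [hv0, hv1] at h; exact absurd h (hxyne i j)
      · rw [hv1, hv0] at h; exact absurd h.symm (hxyne j i)
      · rw [hv1, hv1] at h
        exact congrArg (fun i => some (i, (1 : Fin 2))) (hyinj h)
  refine ⟨⟨⟨φ, hinj⟩, ?_⟩⟩
  rintro (_ | ⟨i, r⟩) (_ | ⟨j, s⟩) <;>
    simp only [Function.Embedding.coeFn_mk]
  · rw [hvn]; exact iff_of_false (G.irrefl) ((windmill n).irrefl)
  · rcases fin2cases s with rfl | rfl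
    · rw [hvn, hv0]; exact iff_of_true (hcx j) (WM_none_some j 0)
    · rw [hvn, hv1]; exact iff_of_true (hcy j) (WM_none_some j 1)
  · rcases fin2cases r with rfl | rfl
    · rw [hvn, hv0]; exact iff_of_true (hcx i).symm (WM_none_some i 0).symm
    · rw [hvn, hv1]; exact iff_of_true (hcy i).symm (WM_none_some i 1).symm
  · rcases fin2cases r with rfl | rfl <;> rcases fin2cases s with rfl | rfl
    · rw [hv0, hv0]
      refine iff_of_false ?_ (WM_zero_zero i j)
      rcases eq_or_ne i j with rfl | hne
      · exact G.irrefl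
      · exact hxx i j hne
    · rw [hv0, hv1, WM_zero_one]; exact key01 i j
    · rw [hv1, hv0, G.adj_comm, (windmill n).adj_comm, WM_zero_one]
      exact key01 j i
    · rw [hv1, hv1]
      refine iff_of_false ?_ (WM_one_one i j)
      rcases eq_or_ne i j with rfl | hne
      · exact G.irrefl
      · exact hyy i j hne

lemma triangle_builder (t : Fin n → Fin 3 → V)
    (hinj2 : ∀ i j r s, t i r = t j s → i = j ∧ r = s)
    (hadj : ∀ i r s, r ≠ s → G.Adj (t i r) (t i s))
    (hcross : ∀ i j r s, i ≠ j → ¬ G.Adj (t i r) (t j s)) :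
    Nonempty (trianglePacking n ↪g G) := by
  have hinj : Function.Injective (fun p : Fin n × Fin 3 => t p.1 p.2) := by
    rintro ⟨i, r⟩ ⟨j, s⟩ h
    obtain ⟨h1, h2⟩ := hinj2 i j r s h
    simp [h1, h2]
  refine ⟨⟨⟨fun p => t p.1 p.2, hinj⟩, ?_⟩⟩
  rintro ⟨i, r⟩ ⟨j, s⟩
  simp only [Function.Embedding.coeFn_mk]
  rw [TP_adj]
  constructor
  · intro h
    have hij : i = j := by
      by_contra hne; exact hcross i j r s hne h
    subst hij
    refine ⟨fun he => ?_, rfl⟩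
    have hrs : r = s := congrArg Prod.snd he
    subst hrs; exact G.irrefl h
  · rintro ⟨hne, h1⟩
    obtain rfl : i = j := h1
    have hrs : r ≠ s := fun he => hne (by rw [he])
    exact hadj i r s hrs

lemma wedge_builder (t : Fin n → Fin 3 → V)
    (hinj2 : ∀ i j r s, t i r = t j s → i = j ∧ r = s)
    (h01 : ∀ i, G.Adj (t i 0) (t i 1)) (h12 : ∀ i, G.Adj (t i 1) (t i 2))
    (h02 : ∀ i, ¬ G.Adj (t i 0) (t i 2))
    (hcross : ∀ i j r s, i ≠ j → ¬ G.Adj (t i r) (t j s)) :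
    Nonempty (wedgePacking n ↪g G) := by
  have hinj : Function.Injective (fun p : Fin n × Fin 3 => t p.1 p.2) := by
    rintro ⟨i, r⟩ ⟨j, s⟩ h
    obtain ⟨h1, h2⟩ := hinj2 i j r s h
    simp [h1, h2]
  refine ⟨⟨⟨fun p => t p.1 p.2, hinj⟩, ?_⟩⟩
  rintro ⟨i, r⟩ ⟨j, s⟩
  simp only [Function.Embedding.coeFn_mk]
  rw [WP_adj]
  constructor
  · intro h
    have hij : i = j := by
      by_contra hne; exact hcross i j r s hne h
    subst hij
    refine ⟨fun he => ?_, rfl, ?_⟩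
    · have hrs : r = s := congrArg Prod.snd he
      subst hrs; exact G.irrefl h
    · fin_cases r <;> fin_cases s <;>
        first
        | exact absurd h G.irrefl
        | exact absurd h (h02 i)
        | exact absurd h (fun h' => h02 i h'.symm)
        | simp
  · rintro ⟨hne, rfl, pat⟩
    rcases pat with ⟨rfl, rfl⟩ | ⟨rfl, rfl⟩ | ⟨rfl, rfl⟩ | ⟨rfl, rfl⟩
    · exact h01 i
    · exact h12 i
    · exact (h01 i).symm
    · exact (h12 i).symm

end Builders

lemma exists_cherries (M m : ℕ) (G : SimpleGraph (Fin M))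
    (hc : ∀ C : Finset (Fin M),
      (∀ u v, G.Adj u v → ¬ IsolatedEdge G u v → u ∈ C ∨ v ∈ C) → 2 * m < C.card) :
    ∃ (ι : ℕ) (u v w : Fin ι → Fin M), m < ι ∧
      (∀ i, G.Adj (u i) (v i)) ∧ (∀ i, G.Adj (u i) (w i)) ∧ (∀ i, w i ≠ v i) ∧
      (∀ i j, i ≠ j → u i ≠ u j ∧ u i ≠ v j ∧ v i ≠ u j ∧ v i ≠ v j) := by
  classical
  set P : Finset (Fin M × Fin M) → Prop := fun Q =>
    (∀ p ∈ Q, G.Adj p.1 p.2 ∧ ¬ IsolatedEdge G p.1 p.2) ∧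
    (∀ p ∈ Q, ∀ q ∈ Q, p ≠ q → p.1 ≠ q.1 ∧ p.1 ≠ q.2 ∧ p.2 ≠ q.1 ∧ p.2 ≠ q.2) with hP
  have hPempty : P ∅ := by rw [hP]; constructor <;> simp
  obtain ⟨Q, hQP, hQmax⟩ := Finset.exists_max_image
    ((Finset.univ : Finset (Finset (Fin M × Fin M))).filter P) Finset.card
    ⟨∅, Finset.mem_filter.mpr ⟨Finset.mem_univ _, hPempty⟩⟩
  rw [mem_filter] at hQP
  obtain ⟨-, hQ1, hQ2⟩ := hQP
  set C : Finset (Fin M) := Q.biUnion (fun p => {p.1, p.2}) with hC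
  have hmemC : ∀ a, a ∈ C ↔ ∃ p ∈ Q, a = p.1 ∨ a = p.2 := by
    intro a; simp [hC, mem_biUnion, mem_insert, mem_singleton]
  have hcover : ∀ u v, G.Adj u v → ¬ IsolatedEdge G u v → u ∈ C ∨ v ∈ C := by
    intro u v hadj hniso
    by_contra hcon
    push_neg at hcon
    obtain ⟨hu, hv⟩ := hcon
    have huv : (u, v) ∉ Q := fun h => hu ((hmemC u).mpr ⟨(u,v), h, Or.inl rfl⟩)
    have hQ' : P (insert (u,v) Q) := by
      constructor
      · intro p hp
        rcases mem_insert.mp hp with rfl | hp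
        · exact ⟨hadj, hniso⟩
        · exact hQ1 p hp
      · have hnotin : ∀ p ∈ Q, u ≠ p.1 ∧ u ≠ p.2 ∧ v ≠ p.1 ∧ v ≠ p.2 := by
          intro p hp
          exact ⟨fun h => hu ((hmemC u).mpr ⟨p, hp, Or.inl h⟩),
            fun h => hu ((hmemC u).mpr ⟨p, hp, Or.inr h⟩),
            fun h => hv ((hmemC v).mpr ⟨p, hp, Or.inl h⟩),
            fun h => hv ((hmemC v).mpr ⟨p, hp, Or.inr h⟩)⟩
        intro p hp q hq hpq
        rcases mem_insert.mp hp with rfl | hp <;> rcases mem_insert.mp hq with rfl | hq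
        · exact absurd rfl hpq
        · obtain ⟨a1, a2, a3, a4⟩ := hnotin q hq
          exact ⟨a1, a2, a3, a4⟩
        · obtain ⟨a1, a2, a3, a4⟩ := hnotin p hp
          exact ⟨a1.symm, a3.symm, a2.symm, a4.symm⟩
        · exact hQ2 p hp q hq hpq
    have := hQmax (insert (u,v) Q) (mem_filter.mpr ⟨mem_univ _, hQ'⟩)
    rw [card_insert_of_notMem huv] at this
    omega
  have hCcard := hc C hcover
  have hCle : C.card ≤ 2 * Q.card := by
    calc C.card ≤ ∑ p ∈ Q, ({p.1, p.2} : Finset (Fin M)).card := card_biUnion_le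
    _ ≤ ∑ p ∈ Q, 2 := by
        refine Finset.sum_le_sum fun p _ => ?_
        exact (card_insert_le _ _).trans (by simp)
    _ = 2 * Q.card := by rw [Finset.sum_const, smul_eq_mul, mul_comm]
  have hmQ : m < Q.card := by omega
  -- index the matching
  set F : Fin Q.card → Fin M × Fin M := fun i => (Q.equivFin.symm i : Fin M × Fin M) with hF
  have hFQ : ∀ i, F i ∈ Q := fun i => (Q.equivFin.symm i).2
  have hFinj : Function.Injective F := by
    intro i j h
    have := Subtype.ext (p := fun x => x ∈ Q) h
    exact Q.equivFin.symm.injective this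
  have hch : ∀ i : Fin Q.card, ∃ uvw : Fin M × Fin M × Fin M,
      G.Adj uvw.1 uvw.2.1 ∧ G.Adj uvw.1 uvw.2.2 ∧ uvw.2.2 ≠ uvw.2.1 ∧
      ((uvw.1 = (F i).1 ∧ uvw.2.1 = (F i).2) ∨ (uvw.1 = (F i).2 ∧ uvw.2.1 = (F i).1)) := by
    intro i
    obtain ⟨hadj, hniso⟩ := hQ1 (F i) (hFQ i)
    rw [IsolatedEdge] at hniso
    push_neg at hniso
    by_cases hA : ∀ w, G.Adj (F i).1 w → w = (F i).2
    · obtain ⟨w, hw1, hw2⟩ := hniso hadj hA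
      exact ⟨((F i).2, (F i).1, w), hadj.symm, hw1, hw2, Or.inr ⟨rfl, rfl⟩⟩
    · push_neg at hA
      obtain ⟨w, hw1, hw2⟩ := hA
      exact ⟨((F i).1, (F i).2, w), hadj, hw1, hw2, Or.inl ⟨rfl, rfl⟩⟩
  choose ch hch1 hch2 hch3 hch4 using hch
  refine ⟨Q.card, fun i => (ch i).1, fun i => (ch i).2.1, fun i => (ch i).2.2, hmQ,
    hch1, hch2, hch3, ?_⟩
  intro i j hij
  dsimp only
  have hFne : F i ≠ F j := fun h => hij (hFinj h)
  obtain ⟨d1, d2, d3, d4⟩ := hQ2 (F i) (hFQ i) (F j) (hFQ j) hFne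
  rcases hch4 i with ⟨e1, e2⟩ | ⟨e1, e2⟩ <;> rcases hch4 j with ⟨f1, f2⟩ | ⟨f1, f2⟩ <;>
    rw [e1, e2, f1, f2] <;> exact ⟨by assumption, by assumption, by assumption, by assumption⟩

lemma greedy_disjoint {ι α : Type*} [DecidableEq ι] [DecidableEq α]
    (u v w : ι → α) (k : ℕ)
    (hpair : ∀ i j, i ≠ j → u i ≠ u j ∧ u i ≠ v j ∧ v i ≠ u j ∧ v i ≠ v j) :
    ∀ s : ℕ, ∀ S : Finset ι,
      (∀ a : α, (S.filter (fun i => w i = a)).card < k) →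
      s * (3 * k + 2) ≤ S.card →
      ∃ J ⊆ S, s ≤ J.card ∧ ∀ i ∈ J, ∀ j ∈ J, i ≠ j →
        w i ≠ w j ∧ w i ≠ u j ∧ w i ≠ v j := by
  intro s
  induction s with
  | zero => exact fun S _ _ => ⟨∅, empty_subset _, by simp, by simp⟩
  | succ s ih =>
    intro S hfib hcard
    have hS : S.Nonempty := card_pos.mp (by nlinarith)
    obtain ⟨i₀, hi₀⟩ := hS
    set Bad := S.filter (fun j => w j = u i₀ ∨ w j = v i₀ ∨ w j = w i₀ ∨
      w i₀ = u j ∨ w i₀ = v j) with hBad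
    have h1 : (S.filter (fun j => w j = u i₀)).card < k := hfib _
    have h2 : (S.filter (fun j => w j = v i₀)).card < k := hfib _
    have h3 : (S.filter (fun j => w j = w i₀)).card < k := hfib _
    have h4 : (S.filter (fun j => w i₀ = u j)).card ≤ 1 := by
      rw [card_le_one]
      intro a ha b hb
      by_contra hne
      exact (hpair a b hne).1
        (((mem_filter.mp ha).2.symm.trans (mem_filter.mp hb).2))
    have h5 : (S.filter (fun j => w i₀ = v j)).card ≤ 1 := by
      rw [card_le_one]
      intro a ha b hb
      by_contra hne
      exact (hpair a b hne).2.2.2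
        (((mem_filter.mp ha).2.symm.trans (mem_filter.mp hb).2))
    have hBadsub : Bad ⊆ (S.filter (fun j => w j = u i₀)) ∪ (S.filter (fun j => w j = v i₀))
        ∪ (S.filter (fun j => w j = w i₀)) ∪ (S.filter (fun j => w i₀ = u j))
        ∪ (S.filter (fun j => w i₀ = v j)) := by
      intro j hj
      rw [hBad, mem_filter] at hj
      obtain ⟨hjS, hor⟩ := hj
      simp only [mem_union, mem_filter]
      tauto
    have hBadcard : Bad.card ≤ 3 * k + 1 := by
      set A1 := S.filter (fun j => w j = u i₀)
      set A2 := S.filter (fun j => w j = v i₀)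
      set A3 := S.filter (fun j => w j = w i₀)
      set A4 := S.filter (fun j => w i₀ = u j)
      set A5 := S.filter (fun j => w i₀ = v j)
      have c0 := card_le_card hBadsub
      have c1 := card_union_le (A1 ∪ A2 ∪ A3 ∪ A4) A5
      have c2 := card_union_le (A1 ∪ A2 ∪ A3) A4
      have c3 := card_union_le (A1 ∪ A2) A3
      have c4 := card_union_le A1 A2
      omega
    set S' := S \ insert i₀ Bad with hS'
    have hsub : S' ⊆ S := sdiff_subset
    have hcard' : s * (3 * k + 2) ≤ S'.card := by
      have hxx : (insert i₀ Bad).card ≤ 3 * k + 2 := (card_insert_le _ _).trans (by omega)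
      have := card_sdiff_add_card_eq_card (sdiff_subset : S' ⊆ S)
      have h6 : S.card ≤ S'.card + (insert i₀ Bad).card := by
        have := card_le_card_sdiff_add_card (s := S) (t := insert i₀ Bad)
        rw [← hS'] at this
        exact this
      nlinarith
    have hfib' : ∀ a : α, (S'.filter (fun i => w i = a)).card < k := fun a =>
      lt_of_le_of_lt (card_le_card (filter_subset_filter _ hsub)) (hfib a)
    obtain ⟨J', hJ'sub, hJ'card, hJ'prop⟩ := ih S' hfib' hcard'
    have hi₀J' : i₀ ∉ J' := fun h => by
      have := hJ'sub h
      rw [hS', mem_sdiff] at this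
      exact this.2 (mem_insert_self _ _)
    have hnotbad : ∀ j ∈ J', ¬ (w j = u i₀ ∨ w j = v i₀ ∨ w j = w i₀ ∨
        w i₀ = u j ∨ w i₀ = v j) := by
      intro j hj hcon
      have hmem := hJ'sub hj
      rw [hS', mem_sdiff] at hmem
      exact hmem.2 (mem_insert_of_mem (by rw [hBad, mem_filter]; exact ⟨hmem.1, hcon⟩))
    refine ⟨insert i₀ J', insert_subset hi₀ (hJ'sub.trans hsub), ?_, ?_⟩
    · rw [card_insert_of_notMem hi₀J']; omega
    · intro i hi j hj hij
      rcases mem_insert.mp hi with hi1 | hi1 <;> rcases mem_insert.mp hj with hj1 | hj1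
      · exact absurd (hi1.trans hj1.symm) hij
      · subst hi1
        have := hnotbad j hj1
        push_neg at this
        exact ⟨fun h => this.2.2.1 h.symm, this.2.2.2.1, this.2.2.2.2⟩
      · subst hj1
        have := hnotbad i hi1
        push_neg at this
        exact ⟨this.2.2.1, this.1, this.2.1⟩
      · exact hJ'prop i hi1 j hj1 hij


lemma bool_split {ι : Type*} [DecidableEq ι] (S : Finset ι) (P : ι → Prop) [DecidablePred P]
    {N : ℕ} (h : N + N ≤ S.card) :
    ∃ T ⊆ S, N ≤ T.card ∧ ((∀ i ∈ T, P i) ∨ (∀ i ∈ T, ¬ P i)) := by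
  have hfc := card_filter_add_card_filter_not (s := S) (p := P)
  rcases le_or_gt N (S.filter P).card with h1 | h1
  · exact ⟨S.filter P, filter_subset _ _, h1, Or.inl fun i hi => (mem_filter.mp hi).2⟩
  · exact ⟨S.filter (fun i => ¬ P i), filter_subset _ _, by omega,
      Or.inr fun i hi => (mem_filter.mp hi).2⟩

lemma caseA (n : ℕ) {M ι : ℕ} (G : SimpleGraph (Fin M))
    (u v : Fin ι → Fin M) (a : Fin M) (I : Finset (Fin ι))
    (huv : ∀ i, G.Adj (u i) (v i))
    (hw : ∀ i ∈ I, G.Adj (u i) a)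
    (hpair : ∀ i j, i ≠ j → u i ≠ u j ∧ u i ≠ v j ∧ v i ≠ u j ∧ v i ≠ v j)
    (hau : ∀ i ∈ I, a ≠ u i) (hav : ∀ i ∈ I, a ≠ v i)
    (hb : (∀ i ∈ I, G.Adj a (v i)) ∨ (∀ i ∈ I, ¬ G.Adj a (v i)))
    (hcard : RN 4 (2 * n) ≤ I.card) :
    Nonempty ((⊤ : SimpleGraph (Fin n)) ↪g G) ∨
    Nonempty (completeBipartiteGraph (Fin n) (Fin n) ↪g G) ∨
    Nonempty (subdividedStar n ↪g G) ∨
    Nonempty (windmill n ↪g G) := by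
  classical
  set vert2 : Fin ι → Fin 2 → Fin M := fun i p => if p = 0 then u i else v i with hvert2
  have v20 : ∀ i, vert2 i 0 = u i := fun i => if_pos rfl
  have v21 : ∀ i, vert2 i 1 = v i := fun i => if_neg (by decide)
  set q1 : Fin 4 → Fin 2 := fun r => ⟨r.val / 2, by omega⟩ with hq1d
  set q2 : Fin 4 → Fin 2 := fun r => ⟨r.val % 2, by omega⟩ with hq2d
  set enc : Fin 2 → Fin 2 → Fin 4 := fun p q => ⟨p.val * 2 + q.val, by omega⟩ with hencd
  have hq1 : ∀ p q, q1 (enc p q) = p := by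
    intro p q; rw [hq1d, hencd]; apply Fin.ext; simp; omega
  have hq2 : ∀ p q, q2 (enc p q) = q := by
    intro p q; rw [hq2d, hencd]; apply Fin.ext; simp [Nat.mul_add_mod]; omega
  obtain ⟨T, hTsub, hTcard, g, hhom⟩ := RN_spec 4 (2 * n) I
    (fun i j => fun r => decide (G.Adj (vert2 i (q1 r)) (vert2 j (q2 r)))) hcard
  set gp : Fin 2 → Fin 2 → Bool := fun p q => g (enc p q) with hgp
  have key : ∀ i ∈ T, ∀ j ∈ T, i < j → ∀ p q : Fin 2,
      (G.Adj (vert2 i p) (vert2 j q) ↔ gp p q = true) := by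
    intro i hi j hj hij p q
    have h1 := congrFun (hhom i hi j hj hij) (enc p q)
    simp only [hq1, hq2] at h1
    have h2 : gp p q = g (enc p q) := rfl
    rw [h2, ← h1, decide_eq_true_eq]
  -- symmetric version for arbitrary distinct indices
  have key' : ∀ i ∈ T, ∀ j ∈ T, i ≠ j → ∀ p q : Fin 2,
      (G.Adj (vert2 i p) (vert2 j q) ↔ (if i < j then gp p q else gp q p) = true) := by
    intro i hi j hj hij p q
    rcases lt_or_gt_of_ne hij with h | h
    · rw [if_pos h]; exact key i hi j hj h p q
    · rw [if_neg (not_lt.mpr h.le), G.adj_comm]; exact key j hj i hi h q p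
  set E : Fin (2 * n) ↪o Fin ι := T.orderEmbOfCardLe hTcard with hE
  have hEmem : ∀ z, E z ∈ T := fun z => T.orderEmbOfCardLe_mem hTcard z
  set En : Fin n → Fin ι := fun z => E ⟨z.val, by omega⟩ with hEn
  set En' : Fin n → Fin ι := fun z => E ⟨n + z.val, by omega⟩ with hEn'
  have hEnmem : ∀ z, En z ∈ T := fun z => hEmem _
  have hEn'mem : ∀ z, En' z ∈ T := fun z => hEmem _
  have hEnlt : ∀ z z' : Fin n, z < z' → En z < En z' :=
    fun z z' h => E.strictMono (by simpa using h)
  have hEnlt' : ∀ z z' : Fin n, En z < En' z' :=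
    fun z z' => E.strictMono (by simp; omega)
  have hEn'lt : ∀ z z' : Fin n, z < z' → En' z < En' z' :=
    fun z z' h => E.strictMono (by simp; omega)
  have hEnne : ∀ z z' : Fin n, z ≠ z' → En z ≠ En z' := by
    intro z z' h he
    have := E.injective he
    simp only [Fin.mk.injEq, Fin.ext_iff] at this
    exact h (Fin.ext this)
  have hEn'ne : ∀ z z' : Fin n, z ≠ z' → En' z ≠ En' z' := by
    intro z z' h he
    have := E.injective he
    simp only [Fin.mk.injEq, Fin.ext_iff] at this
    exact h (Fin.ext (by omega))
  have hEnEn' : ∀ z z' : Fin n, En z ≠ En' z' := by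
    intro z z' he
    have := E.injective he
    simp only [Fin.mk.injEq, Fin.ext_iff] at this
    omega
  have hIT : ∀ z ∈ T, z ∈ I := fun z hz => hTsub hz
  -- case analysis on the pattern gp
  by_cases h00 : gp 0 0 = true
  · -- clique on the u's
    refine Or.inl (clique_builder (fun z => u (En z)) ?_ ?_)
    · intro z z' h
      by_contra hne
      exact (hpair _ _ (hEnne z z' hne)).1 h
    · intro z z' hne
      have hne' := hEnne z z' hne
      have := (key' (En z) (hEnmem z) (En z') (hEnmem z') hne' 0 0).mpr
      rw [v20, v20] at this
      apply this
      split <;> exact h00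
  · by_cases h11 : gp 1 1 = true
    · refine Or.inl (clique_builder (fun z => v (En z)) ?_ ?_)
      · intro z z' h
        by_contra hne
        exact (hpair _ _ (hEnne z z' hne)).2.2.2 h
      · intro z z' hne
        have hne' := hEnne z z' hne
        have := (key' (En z) (hEnmem z) (En z') (hEnmem z') hne' 1 1).mpr
        rw [v21, v21] at this
        apply this
        split <;> exact h11
    · -- diagonal entries are false
      have hd00 : ∀ i ∈ T, ∀ j ∈ T, i ≠ j → ¬ G.Adj (u i) (u j) := by
        intro i hi j hj hij h
        have := (key' i hi j hj hij 0 0).mp (by rw [v20, v20]; exact h)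
        revert this; split <;> simp [h00]
      have hd11 : ∀ i ∈ T, ∀ j ∈ T, i ≠ j → ¬ G.Adj (v i) (v j) := by
        intro i hi j hj hij h
        have := (key' i hi j hj hij 1 1).mp (by rw [v21, v21]; exact h)
        revert this; split <;> simp [h11]
      by_cases h01 : gp 0 1 = true
      · by_cases h10 : gp 1 0 = true
        · -- K_{n,n} on (u_i), (v_i) over the same indices
          refine Or.inr (Or.inl (biclique_builder (fun z => u (En z)) (fun z => v (En z))
            ?_ ?_ ?_ ?_ ?_ ?_))
          · intro z z' h; by_contra hne; exact (hpair _ _ (hEnne z z' hne)).1 h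
          · intro z z' h; by_contra hne; exact (hpair _ _ (hEnne z z' hne)).2.2.2 h
          · intro z z'
            rcases eq_or_ne z z' with rfl | hne
            · exact (huv (En z)).ne
            · exact (hpair _ _ (hEnne z z' hne)).2.1
          · intro z z'
            rcases eq_or_ne z z' with rfl | hne
            · exact huv (En z)
            · have hne' := hEnne z z' hne
              have := (key' (En z) (hEnmem z) (En z') (hEnmem z') hne' 0 1).mpr
              rw [v20, v21] at this
              apply this
              split <;> [exact h01; exact h10]
          · exact fun z z' => fun h => by
              rcases eq_or_ne z z' with rfl | hne
              · exact G.irrefl h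
              · exact hd00 _ (hEnmem z) _ (hEnmem z') (hEnne z z' hne) h
          · exact fun z z' => fun h => by
              rcases eq_or_ne z z' with rfl | hne
              · exact G.irrefl h
              · exact hd11 _ (hEnmem z) _ (hEnmem z') (hEnne z z' hne) h
        · -- only gp 0 1 : split bipartite
          refine Or.inr (Or.inl (biclique_builder (fun z => u (En z)) (fun z => v (En' z))
            ?_ ?_ ?_ ?_ ?_ ?_))
          · intro z z' h; by_contra hne; exact (hpair _ _ (hEnne z z' hne)).1 h
          · intro z z' h; by_contra hne; exact (hpair _ _ (hEn'ne z z' hne)).2.2.2 h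
          · exact fun z z' => (hpair _ _ (hEnEn' z z')).2.1
          · intro z z'
            have hlt := hEnlt' z z'
            have := (key (En z) (hEnmem z) (En' z') (hEn'mem z') hlt 0 1).mpr h01
            rw [v20, v21] at this; exact this
          · exact fun z z' => fun h => by
              rcases eq_or_ne z z' with rfl | hne
              · exact G.irrefl h
              · exact hd00 _ (hEnmem z) _ (hEnmem z') (hEnne z z' hne) h
          · exact fun z z' => fun h => by
              rcases eq_or_ne z z' with rfl | hne
              · exact G.irrefl h
              · exact hd11 _ (hEn'mem z) _ (hEn'mem z') (hEn'ne z z' hne) h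
      · by_cases h10 : gp 1 0 = true
        · -- only gp 1 0 : v's first, u's later
          refine Or.inr (Or.inl (biclique_builder (fun z => v (En z)) (fun z => u (En' z))
            ?_ ?_ ?_ ?_ ?_ ?_))
          · intro z z' h; by_contra hne; exact (hpair _ _ (hEnne z z' hne)).2.2.2 h
          · intro z z' h; by_contra hne; exact (hpair _ _ (hEn'ne z z' hne)).1 h
          · intro z z'; exact (hpair _ _ (hEnEn' z z')).2.2.1
          · intro z z'
            have hlt := hEnlt' z z'
            have := (key (En z) (hEnmem z) (En' z') (hEn'mem z') hlt 1 0).mpr h10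
            rw [v21, v20] at this; exact this
          · exact fun z z' => fun h => by
              rcases eq_or_ne z z' with rfl | hne
              · exact G.irrefl h
              · exact hd11 _ (hEnmem z) _ (hEnmem z') (hEnne z z' hne) h
          · exact fun z z' => fun h => by
              rcases eq_or_ne z z' with rfl | hne
              · exact G.irrefl h
              · exact hd00 _ (hEn'mem z) _ (hEn'mem z') (hEn'ne z z' hne) h
        · -- all cross entries false: star or windmill
          have hd01 : ∀ i ∈ T, ∀ j ∈ T, i ≠ j → ¬ G.Adj (u i) (v j) := by
            intro i hi j hj hij h
            have := (key' i hi j hj hij 0 1).mp (by rw [v20, v21]; exact h)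
            revert this; split <;> simp [h01, h10]
          rcases hb with hbt | hbf
          · refine Or.inr (Or.inr (Or.inr (windmill_builder a
              (fun z => u (En z)) (fun z => v (En z)) ?_ ?_ ?_ ?_ ?_ ?_ ?_ ?_ ?_ ?_ ?_)))
            · intro z z' h; by_contra hne; exact (hpair _ _ (hEnne z z' hne)).1 h
            · intro z z' h; by_contra hne; exact (hpair _ _ (hEnne z z' hne)).2.2.2 h
            · intro z z'
              rcases eq_or_ne z z' with rfl | hne
              · exact (huv (En z)).ne
              · exact (hpair _ _ (hEnne z z' hne)).2.1
            · exact fun z => hau _ (hIT _ (hEnmem z))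
            · exact fun z => hav _ (hIT _ (hEnmem z))
            · exact fun z => (hw _ (hIT _ (hEnmem z))).symm
            · exact fun z => hbt _ (hIT _ (hEnmem z))
            · exact fun z => huv (En z)
            · exact fun z z' hne => hd00 _ (hEnmem z) _ (hEnmem z') (hEnne z z' hne)
            · exact fun z z' hne => hd11 _ (hEnmem z) _ (hEnmem z') (hEnne z z' hne)
            · exact fun z z' hne => hd01 _ (hEnmem z) _ (hEnmem z') (hEnne z z' hne)
          · refine Or.inr (Or.inr (Or.inl (subdividedStar_builder a
              (fun z => u (En z)) (fun z => v (En z)) ?_ ?_ ?_ ?_ ?_ ?_ ?_ ?_ ?_ ?_ ?_)))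
            · intro z z' h; by_contra hne; exact (hpair _ _ (hEnne z z' hne)).1 h
            · intro z z' h; by_contra hne; exact (hpair _ _ (hEnne z z' hne)).2.2.2 h
            · intro z z'
              rcases eq_or_ne z z' with rfl | hne
              · exact (huv (En z)).ne
              · exact (hpair _ _ (hEnne z z' hne)).2.1
            · exact fun z => hau _ (hIT _ (hEnmem z))
            · exact fun z => hav _ (hIT _ (hEnmem z))
            · exact fun z => (hw _ (hIT _ (hEnmem z))).symm
            · exact fun z => huv (En z)
            · exact fun z => hbf _ (hIT _ (hEnmem z))
            · exact fun z z' hne => hd00 _ (hEnmem z) _ (hEnmem z') (hEnne z z' hne)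
            · exact fun z z' hne => hd11 _ (hEnmem z) _ (hEnmem z') (hEnne z z' hne)
            · exact fun z z' hne => hd01 _ (hEnmem z) _ (hEnmem z') (hEnne z z' hne)

lemma caseB (n : ℕ) {M ι : ℕ} (G : SimpleGraph (Fin M))
    (u v w : Fin ι → Fin M) (J : Finset (Fin ι))
    (huv : ∀ i, G.Adj (u i) (v i)) (huw : ∀ i, G.Adj (u i) (w i))
    (hwv : ∀ i, w i ≠ v i)
    (hpair : ∀ i j, i ≠ j → u i ≠ u j ∧ u i ≠ v j ∧ v i ≠ u j ∧ v i ≠ v j)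
    (hdisj : ∀ i ∈ J, ∀ j ∈ J, i ≠ j → w i ≠ w j ∧ w i ≠ u j ∧ w i ≠ v j)
    (ht : (∀ i ∈ J, G.Adj (v i) (w i)) ∨ (∀ i ∈ J, ¬ G.Adj (v i) (w i)))
    (hcard : RN 9 (2 * n) ≤ J.card) :
    Nonempty ((⊤ : SimpleGraph (Fin n)) ↪g G) ∨
    Nonempty (completeBipartiteGraph (Fin n) (Fin n) ↪g G) ∨
    Nonempty (trianglePacking n ↪g G) ∨
    Nonempty (wedgePacking n ↪g G) := by
  classical
  set vert3 : Fin ι → Fin 3 → Fin M := fun i p => if p = 0 then u i else if p = 1 then v i else w i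
    with hvert3
  have v30 : ∀ i, vert3 i 0 = u i := fun i => if_pos rfl
  have v31 : ∀ i, vert3 i 1 = v i := fun i => by rw [hvert3]; norm_num
  have v32 : ∀ i, vert3 i 2 = w i := fun i => by rw [hvert3]; dsimp only; rw [if_neg (by decide), if_neg (by decide)]
  set q1 : Fin 9 → Fin 3 := fun r => ⟨r.val / 3, by omega⟩ with hq1d
  set q2 : Fin 9 → Fin 3 := fun r => ⟨r.val % 3, by omega⟩ with hq2d
  set enc : Fin 3 → Fin 3 → Fin 9 := fun p q => ⟨p.val * 3 + q.val, by omega⟩ with hencd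
  have hq1 : ∀ p q, q1 (enc p q) = p := by
    intro p q; rw [hq1d, hencd]; apply Fin.ext; simp; omega
  have hq2 : ∀ p q, q2 (enc p q) = q := by
    intro p q; rw [hq2d, hencd]; apply Fin.ext; simp
  have hencq : ∀ r, enc (q1 r) (q2 r) = r := by
    intro r; rw [hq1d, hq2d, hencd]; apply Fin.ext; simp; omega
  obtain ⟨T, hTsub, hTcard, g, hhom⟩ := RN_spec 9 (2 * n) J
    (fun i j => fun r => decide (G.Adj (vert3 i (q1 r)) (vert3 j (q2 r)))) hcard
  set gp : Fin 3 → Fin 3 → Bool := fun p q => g (enc p q) with hgp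
  have key : ∀ i ∈ T, ∀ j ∈ T, i < j → ∀ p q : Fin 3,
      (G.Adj (vert3 i p) (vert3 j q) ↔ gp p q = true) := by
    intro i hi j hj hij p q
    have h1 := congrFun (hhom i hi j hj hij) (enc p q)
    simp only [hq1, hq2] at h1
    have h2 : gp p q = g (enc p q) := rfl
    rw [h2, ← h1, decide_eq_true_eq]
  have key' : ∀ i ∈ T, ∀ j ∈ T, i ≠ j → ∀ p q : Fin 3,
      (G.Adj (vert3 i p) (vert3 j q) ↔ (if i < j then gp p q else gp q p) = true) := by
    intro i hi j hj hij p q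
    rcases lt_or_gt_of_ne hij with h | h
    · rw [if_pos h]; exact key i hi j hj h p q
    · rw [if_neg (not_lt.mpr h.le), G.adj_comm]; exact key j hj i hi h q p
  set E : Fin (2 * n) ↪o Fin ι := T.orderEmbOfCardLe hTcard with hE
  have hEmem : ∀ z, E z ∈ T := fun z => T.orderEmbOfCardLe_mem hTcard z
  set En : Fin n → Fin ι := fun z => E ⟨z.val, by omega⟩ with hEn
  set En' : Fin n → Fin ι := fun z => E ⟨n + z.val, by omega⟩ with hEn'
  have hEnmem : ∀ z, En z ∈ T := fun z => hEmem _
  have hEn'mem : ∀ z, En' z ∈ T := fun z => hEmem _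
  have hEnlt' : ∀ z z' : Fin n, En z < En' z' :=
    fun z z' => E.strictMono (by simp; omega)
  have hEnne : ∀ z z' : Fin n, z ≠ z' → En z ≠ En z' := by
    intro z z' h he
    have := E.injective he
    simp only [Fin.mk.injEq, Fin.ext_iff] at this
    exact h (Fin.ext this)
  have hEn'ne : ∀ z z' : Fin n, z ≠ z' → En' z ≠ En' z' := by
    intro z z' h he
    have := E.injective he
    simp only [Fin.mk.injEq, Fin.ext_iff] at this
    exact h (Fin.ext (by omega))
  have hEnEn' : ∀ z z' : Fin n, En z ≠ En' z' := by
    intro z z' he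
    have := E.injective he
    simp only [Fin.mk.injEq, Fin.ext_iff] at this
    omega
  have hTJ : ∀ z ∈ T, z ∈ J := fun z hz => hTsub hz
  -- distinctness of cherry vertices across distinct indices in J
  have hvne : ∀ i ∈ T, ∀ j ∈ T, i ≠ j → ∀ p q, vert3 i p ≠ vert3 j q := by
    intro i hi j hj hij p q
    obtain ⟨w1, w2, w3⟩ := hdisj i (hTJ i hi) j (hTJ j hj) hij
    obtain ⟨w1', w2', w3'⟩ := hdisj j (hTJ j hj) i (hTJ i hi) hij.symm
    obtain ⟨p1, p2, p3, p4⟩ := hpair i j hij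
    fin_cases p <;> fin_cases q <;>
      simp only [v30, v31, v32, Fin.isValue] <;>
      first
      | exact p1 | exact p2 | exact p3 | exact p4
      | exact w1 | exact w2 | exact w3
      | exact w1'.symm | exact w2'.symm | exact w3'.symm
      | exact fun h => w2' h.symm | exact fun h => w3' h.symm
  -- distinctness within a cherry
  have hvne' : ∀ i, ∀ p q : Fin 3, p ≠ q → vert3 i p ≠ vert3 i q := by
    intro i p q hpq
    fin_cases p <;> fin_cases q <;>
      simp only [v30, v31, v32, Fin.isValue] <;>
      first
      | exact absurd rfl hpq
      | exact (huv i).ne | exact (huw i).ne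
      | exact fun h => (huv i).ne h.symm | exact fun h => (huw i).ne h.symm
      | exact hwv i | exact fun h => hwv i h.symm
  by_cases hdiag : ∃ p : Fin 3, gp p p = true
  · obtain ⟨p, hp⟩ := hdiag
    refine Or.inl (clique_builder (fun z => vert3 (En z) p) ?_ ?_)
    · intro z z' h
      by_contra hne
      exact hvne _ (hEnmem z) _ (hEnmem z') (hEnne z z' hne) p p h
    · intro z z' hne
      have := (key' (En z) (hEnmem z) (En z') (hEnmem z') (hEnne z z' hne) p p).mpr
      apply this
      split <;> exact hp
  · push_neg at hdiag
    have hdiagf : ∀ p, gp p p = false := fun p => Bool.not_eq_true _ |>.mp (hdiag p)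
    have hnd : ∀ p, ∀ i ∈ T, ∀ j ∈ T, i ≠ j → ¬ G.Adj (vert3 i p) (vert3 j p) := by
      intro p i hi j hj hij h
      have := (key' i hi j hj hij p p).mp h
      revert this; split <;> simp [hdiagf]
    by_cases hoff : ∃ r : Fin 9, g r = true
    · obtain ⟨r, hr⟩ := hoff
      set p := q1 r with hpd
      set q := q2 r with hqd
      have hgpq : gp p q = true := by
        have : gp p q = g (enc (q1 r) (q2 r)) := rfl
        rw [this, hencq]; exact hr
      have hpq : p ≠ q := by
        intro h
        rw [h] at hgpq
        rw [hdiagf q] at hgpq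
        exact Bool.false_ne_true hgpq
      refine Or.inr (Or.inl (biclique_builder (fun z => vert3 (En z) p)
        (fun z => vert3 (En' z) q) ?_ ?_ ?_ ?_ ?_ ?_))
      · intro z z' h
        by_contra hne
        exact hvne _ (hEnmem z) _ (hEnmem z') (hEnne z z' hne) p p h
      · intro z z' h
        by_contra hne
        exact hvne _ (hEn'mem z) _ (hEn'mem z') (hEn'ne z z' hne) q q h
      · exact fun z z' => hvne _ (hEnmem z) _ (hEn'mem z') (hEnEn' z z') p q
      · intro z z'
        exact (key (En z) (hEnmem z) (En' z') (hEn'mem z') (hEnlt' z z') p q).mpr hgpq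
      · intro z z' h
        rcases eq_or_ne z z' with rfl | hne
        · exact G.irrefl h
        · exact hnd p _ (hEnmem z) _ (hEnmem z') (hEnne z z' hne) h
      · intro z z' h
        rcases eq_or_ne z z' with rfl | hne
        · exact G.irrefl h
        · exact hnd q _ (hEn'mem z) _ (hEn'mem z') (hEn'ne z z' hne) h
    · push_neg at hoff
      have hallf : ∀ p q : Fin 3, gp p q = false :=
        fun p q => Bool.not_eq_true _ |>.mp (hoff (enc p q))
      have hnone : ∀ i ∈ T, ∀ j ∈ T, i ≠ j → ∀ p q, ¬ G.Adj (vert3 i p) (vert3 j q) := by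
        intro i hi j hj hij p q h
        have := (key' i hi j hj hij p q).mp h
        revert this; split <;> simp [hallf]
      rcases ht with htt | htf
      · -- triangles
        refine Or.inr (Or.inr (Or.inl (triangle_builder (fun z r => vert3 (En z) r) ?_ ?_ ?_)))
        · intro z z' r s h
          rcases eq_or_ne z z' with rfl | hne
          · refine ⟨rfl, ?_⟩
            by_contra hrs
            exact hvne' (En z) r s hrs h
          · exact absurd h (hvne _ (hEnmem z) _ (hEnmem z') (hEnne z z' hne) r s)
        · intro z r s hrs
          have hvw : G.Adj (v (En z)) (w (En z)) := htt _ (hTJ _ (hEnmem z))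
          fin_cases r <;> fin_cases s <;>
            simp only [v30, v31, v32, Fin.isValue] <;>
            first
            | exact absurd rfl hrs
            | exact huv (En z) | exact huw (En z) | exact hvw
            | exact (huv (En z)).symm | exact (huw (En z)).symm | exact hvw.symm
        · intro z z' r s hne
          exact hnone _ (hEnmem z) _ (hEnmem z') (hEnne z z' hne) r s
      · -- wedges: positions 0 ↦ v, 1 ↦ u, 2 ↦ w
        have hσ : ∀ r : Fin 3, (![1, 0, 2] : Fin 3 → Fin 3) r = if r = 0 then 1 else
            if r = 1 then 0 else 2 := by decide
        set σ : Fin 3 → Fin 3 := ![1, 0, 2] with hσd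
        have hσinj : Function.Injective σ := by decide
        refine Or.inr (Or.inr (Or.inr (wedge_builder (fun z r => vert3 (En z) (σ r))
          ?_ ?_ ?_ ?_ ?_)))
        · intro z z' r s h
          rcases eq_or_ne z z' with rfl | hne
          · refine ⟨rfl, ?_⟩
            by_contra hrs
            exact hvne' (En z) (σ r) (σ s) (fun hh => hrs (hσinj hh)) h
          · exact absurd h (hvne _ (hEnmem z) _ (hEnmem z') (hEnne z z' hne) (σ r) (σ s))
        · intro z
          have e0 : σ 0 = 1 := by decide
          have e1 : σ 1 = 0 := by decide
          rw [e0, e1, v31, v30]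
          exact (huv (En z)).symm
        · intro z
          have e1 : σ 1 = 0 := by decide
          have e2 : σ 2 = 2 := by decide
          rw [e1, e2, v30, v32]
          exact huw (En z)
        · intro z
          have e0 : σ 0 = 1 := by decide
          have e2 : σ 2 = 2 := by decide
          rw [e0, e2, v31, v32]
          exact htf _ (hTJ _ (hEnmem z))
        · intro z z' r s hne
          exact hnone _ (hEnmem z) _ (hEnmem z') (hEnne z z' hne) (σ r) (σ s)

section Downcast
variable {V : Type*} {G : SimpleGraph V}

lemma cast_top {a b : ℕ} (h : a ≤ b) :
    Nonempty ((⊤ : SimpleGraph (Fin b)) ↪g G) →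
    Nonempty ((⊤ : SimpleGraph (Fin a)) ↪g G) := by
  rintro ⟨e⟩
  obtain ⟨c⟩ := clique_builder (G := (⊤ : SimpleGraph (Fin b))) (Fin.castLE h)
    (Fin.castLE_injective h)
    (fun i j hij => by
      rw [top_adj]; exact fun hh => hij (Fin.castLE_injective h hh))
  exact ⟨e.comp c⟩

lemma cast_biclique {a b : ℕ} (h : a ≤ b) :
    Nonempty (completeBipartiteGraph (Fin b) (Fin b) ↪g G) →
    Nonempty (completeBipartiteGraph (Fin a) (Fin a) ↪g G) := by
  rintro ⟨e⟩
  obtain ⟨c⟩ := biclique_builder (G := completeBipartiteGraph (Fin b) (Fin b))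
    (fun i => Sum.inl (Fin.castLE h i)) (fun i => Sum.inr (Fin.castLE h i))
    (fun i j hij => Fin.castLE_injective h (Sum.inl.inj hij))
    (fun i j hij => Fin.castLE_injective h (Sum.inr.inj hij))
    (fun i j hij => by simp at hij)
    (fun i j => by simp)
    (fun i j => by simp)
    (fun i j => by simp)
  exact ⟨e.comp c⟩

lemma cast_SS {a b : ℕ} (h : a ≤ b) :
    Nonempty (subdividedStar b ↪g G) → Nonempty (subdividedStar a ↪g G) := by
  rintro ⟨e⟩
  obtain ⟨c⟩ := subdividedStar_builder (G := subdividedStar b) none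
    (fun i => some (Fin.castLE h i, 0)) (fun i => some (Fin.castLE h i, 1))
    (fun i j hij => by
      simp only [Option.some.injEq, Prod.mk.injEq] at hij
      exact Fin.ext (by simpa using congrArg Fin.val (Fin.castLE_injective h hij.1)))
    (fun i j hij => by
      simp only [Option.some.injEq, Prod.mk.injEq] at hij
      exact Fin.ext (by simpa using congrArg Fin.val (Fin.castLE_injective h hij.1)))
    (fun i j hij => by simp at hij)
    (fun i hij => by simp at hij)
    (fun i hij => by simp at hij)
    (fun i => SS_none_zero _)
    (fun i => (SS_zero_one _ _).mpr rfl)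
    (fun i => SS_none_one _)
    (fun i j hij hadj => absurd hadj (SS_zero_zero _ _))
    (fun i j hij hadj => SS_one_one _ _ hadj)
    (fun i j hij hadj => hij (Fin.castLE_injective h ((SS_zero_one _ _).mp hadj)))
  exact ⟨e.comp c⟩

lemma cast_WM {a b : ℕ} (h : a ≤ b) :
    Nonempty (windmill b ↪g G) → Nonempty (windmill a ↪g G) := by
  rintro ⟨e⟩
  obtain ⟨c⟩ := windmill_builder (G := windmill b) none
    (fun i => some (Fin.castLE h i, 0)) (fun i => some (Fin.castLE h i, 1))
    (fun i j hij => by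
      simp only [Option.some.injEq, Prod.mk.injEq] at hij
      exact Fin.ext (by simpa using congrArg Fin.val (Fin.castLE_injective h hij.1)))
    (fun i j hij => by
      simp only [Option.some.injEq, Prod.mk.injEq] at hij
      exact Fin.ext (by simpa using congrArg Fin.val (Fin.castLE_injective h hij.1)))
    (fun i j hij => by simp at hij)
    (fun i hij => by simp at hij)
    (fun i hij => by simp at hij)
    (fun i => WM_none_some _ _)
    (fun i => WM_none_some _ _)
    (fun i => (WM_zero_one _ _).mpr rfl)
    (fun i j hij hadj => WM_zero_zero _ _ hadj)
    (fun i j hij hadj => WM_one_one _ _ hadj)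
    (fun i j hij hadj => hij (Fin.castLE_injective h ((WM_zero_one _ _).mp hadj)))
  exact ⟨e.comp c⟩

lemma cast_TP {a b : ℕ} (h : a ≤ b) :
    Nonempty (trianglePacking b ↪g G) → Nonempty (trianglePacking a ↪g G) := by
  rintro ⟨e⟩
  obtain ⟨c⟩ := triangle_builder (G := trianglePacking b)
    (fun i r => (Fin.castLE h i, r))
    (fun i j r s hij => by
      simp only [Prod.mk.injEq] at hij
      exact ⟨Fin.castLE_injective h hij.1, hij.2⟩)
    (fun i r s hrs => (TP_adj _ _).mpr ⟨by simp [hrs], rfl⟩)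
    (fun i j r s hij hadj => hij (Fin.castLE_injective h ((TP_adj _ _).mp hadj).2))
  exact ⟨e.comp c⟩

lemma cast_WP {a b : ℕ} (h : a ≤ b) :
    Nonempty (wedgePacking b ↪g G) → Nonempty (wedgePacking a ↪g G) := by
  rintro ⟨e⟩
  obtain ⟨c⟩ := wedge_builder (G := wedgePacking b)
    (fun i r => (Fin.castLE h i, r))
    (fun i j r s hij => by
      simp only [Prod.mk.injEq] at hij
      exact ⟨Fin.castLE_injective h hij.1, hij.2⟩)
    (fun i => (WP_adj _ _ _ _).mpr ⟨by simp, rfl, Or.inl ⟨rfl, rfl⟩⟩)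
    (fun i => (WP_adj _ _ _ _).mpr ⟨by simp, rfl, Or.inr (Or.inl ⟨rfl, rfl⟩)⟩)
    (fun i hadj => by
      obtain ⟨-, -, hpat⟩ := (WP_adj _ _ _ _).mp hadj
      rcases hpat with ⟨h1, h2⟩ | ⟨h1, h2⟩ | ⟨h1, h2⟩ | ⟨h1, h2⟩ <;> simp at h1 h2)
    (fun i j r s hij hadj => hij (Fin.castLE_injective h ((WP_adj _ _ _ _).mp hadj).2.1))
  exact ⟨e.comp c⟩

end Downcast

lemma main_graph (n : ℕ) : ∃ c : ℕ, ∀ (M : ℕ) (G : SimpleGraph (Fin M)),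
    (∀ C : Finset (Fin M),
      (∀ u v, G.Adj u v → ¬ IsolatedEdge G u v → u ∈ C ∨ v ∈ C) → c < C.card) →
    Nonempty ((⊤ : SimpleGraph (Fin n)) ↪g G) ∨
    Nonempty (completeBipartiteGraph (Fin n) (Fin n) ↪g G) ∨
    Nonempty (subdividedStar n ↪g G) ∨
    Nonempty (windmill n ↪g G) ∨
    Nonempty (trianglePacking n ↪g G) ∨
    Nonempty (wedgePacking n ↪g G) := by
  classical
  set k := RN 4 (2 * n) + RN 4 (2 * n) + 2 with hk
  set s := RN 9 (2 * n) + RN 9 (2 * n) with hs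
  set m := s * (3 * k + 2) with hm
  refine ⟨2 * m, ?_⟩
  intro M G hc
  obtain ⟨ι, u, v, w, hmι, huv, huw, hwv, hpair⟩ := exists_cherries M m G hc
  by_cases hA : ∃ a : Fin M, k ≤ ((Finset.univ : Finset (Fin ι)).filter (fun i => w i = a)).card
  · obtain ⟨a, ha⟩ := hA
    set I₀ := ((Finset.univ : Finset (Fin ι)).filter (fun i => w i = a)) with hI₀
    have hwa : ∀ i ∈ I₀, w i = a := fun i hi => (mem_filter.mp hi).2
    set I₁ := I₀.filter (fun i => a ≠ u i ∧ a ≠ v i) with hI₁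
    have hu1 : (I₀.filter (fun i => a = u i)).card ≤ 1 := by
      rw [card_le_one]
      intro i hi j hj
      by_contra hne
      exact (hpair i j hne).1 ((mem_filter.mp hi).2.symm.trans (mem_filter.mp hj).2)
    have hv1 : (I₀.filter (fun i => a = v i)).card ≤ 1 := by
      rw [card_le_one]
      intro i hi j hj
      by_contra hne
      exact (hpair i j hne).2.2.2 ((mem_filter.mp hi).2.symm.trans (mem_filter.mp hj).2)
    have hI₀split : I₀ ⊆ I₁ ∪ I₀.filter (fun i => a = u i) ∪ I₀.filter (fun i => a = v i) := by
      intro i hi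
      simp only [mem_union, hI₁, mem_filter]
      by_cases h1 : a = u i
      · exact Or.inl (Or.inr ⟨hi, h1⟩)
      · by_cases h2 : a = v i
        · exact Or.inr ⟨hi, h2⟩
        · exact Or.inl (Or.inl ⟨hi, h1, h2⟩)
    have hI₁card : RN 4 (2 * n) + RN 4 (2 * n) ≤ I₁.card := by
      have c0 := card_le_card hI₀split
      have c1 := card_union_le (I₁ ∪ I₀.filter (fun i => a = u i))
        (I₀.filter (fun i => a = v i))
      have c2 := card_union_le I₁ (I₀.filter (fun i => a = u i))
      omega
    obtain ⟨I₂, hI₂sub, hI₂card, hb⟩ := bool_split I₁ (fun i => G.Adj a (v i)) hI₁card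
    have hI₂I₀ : ∀ i ∈ I₂, i ∈ I₀ := fun i hi => (filter_subset _ _) (hI₂sub hi)
    have hI₂good : ∀ i ∈ I₂, a ≠ u i ∧ a ≠ v i :=
      fun i hi => (mem_filter.mp (hI₂sub hi)).2
    have res := caseA n G u v a I₂ huv
      (fun i hi => by rw [← hwa i (hI₂I₀ i hi)]; exact huw i)
      hpair
      (fun i hi => (hI₂good i hi).1)
      (fun i hi => (hI₂good i hi).2)
      hb hI₂card
    rcases res with h | h | h | h
    · exact Or.inl h
    · exact Or.inr (Or.inl h)
    · exact Or.inr (Or.inr (Or.inl h))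
    · exact Or.inr (Or.inr (Or.inr (Or.inl h)))
  · push_neg at hA
    have hfib : ∀ a : Fin M,
        ((Finset.univ : Finset (Fin ι)).filter (fun i => w i = a)).card < k := hA
    have hcard_univ : s * (3 * k + 2) ≤ (Finset.univ : Finset (Fin ι)).card := by
      rw [Finset.card_univ, Fintype.card_fin]
      omega
    obtain ⟨J, hJsub, hJcard, hdisj⟩ := greedy_disjoint u v w k hpair s Finset.univ hfib hcard_univ
    obtain ⟨J₂, hJ₂sub, hJ₂card, ht⟩ := bool_split J (fun i => G.Adj (v i) (w i))
      (le_trans (le_of_eq hs.symm) hJcard)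
    have hdisj₂ : ∀ i ∈ J₂, ∀ j ∈ J₂, i ≠ j → w i ≠ w j ∧ w i ≠ u j ∧ w i ≠ v j :=
      fun i hi j hj hij => hdisj i (hJ₂sub hi) j (hJ₂sub hj) hij
    have ht₂ : (∀ i ∈ J₂, G.Adj (v i) (w i)) ∨ (∀ i ∈ J₂, ¬ G.Adj (v i) (w i)) := ht
    have res := caseB n G u v w J₂ huv huw hwv hpair hdisj₂ ht₂ hJ₂card
    rcases res with h | h | h | h
    · exact Or.inl h
    · exact Or.inr (Or.inl h)
    · exact Or.inr (Or.inr (Or.inr (Or.inr (Or.inl h))))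
    · exact Or.inr (Or.inr (Or.inr (Or.inr (Or.inr h))))

end Aux

/-- If a class `ℋ` of finite graphs has unbounded weak vertex-cover number (no constant
bounds the size of a minimum vertex cover of the graphs after deleting isolated edges),
then `ℋ` contains arbitrarily large cliques, bicliques, subdivided stars, windmills,
triangle packings, or wedge packings as induced subgraphs. -/
theorem unbounded_weak_vertexCover_contains_hard_class
    (ℋ : Set (Σ n : ℕ, SimpleGraph (Fin n)))
    (hunb : ∀ c : ℕ, ∃ H ∈ ℋ, ∀ C : Finset (Fin H.1),
      (∀ u v, H.2.Adj u v → ¬ IsolatedEdge H.2 u v → u ∈ C ∨ v ∈ C) → c < C.card) :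
    (∀ n : ℕ, ∃ H ∈ ℋ, Nonempty ((⊤ : SimpleGraph (Fin n)) ↪g H.2)) ∨
    (∀ n : ℕ, ∃ H ∈ ℋ, Nonempty (completeBipartiteGraph (Fin n) (Fin n) ↪g H.2)) ∨
    (∀ n : ℕ, ∃ H ∈ ℋ, Nonempty (subdividedStar n ↪g H.2)) ∨
    (∀ n : ℕ, ∃ H ∈ ℋ, Nonempty (windmill n ↪g H.2)) ∨
    (∀ n : ℕ, ∃ H ∈ ℋ, Nonempty (trianglePacking n ↪g H.2)) ∨
    (∀ n : ℕ, ∃ H ∈ ℋ, Nonempty (wedgePacking n ↪g H.2)) := by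
  by_contra hcon
  push_neg at hcon
  obtain ⟨⟨n₁, h₁⟩, ⟨n₂, h₂⟩, ⟨n₃, h₃⟩, ⟨n₄, h₄⟩, ⟨n₅, h₅⟩, ⟨n₆, h₆⟩⟩ := hcon
  set n := n₁ + n₂ + n₃ + n₄ + n₅ + n₆ with hn
  obtain ⟨c, hmain⟩ := main_graph n
  obtain ⟨H, hH, hcov⟩ := hunb c
  rcases hmain H.1 H.2 hcov with h | h | h | h | h | h
  · exact not_nonempty_iff.mpr (h₁ H hH) (cast_top (by omega) h)
  · exact not_nonempty_iff.mpr (h₂ H hH) (cast_biclique (by omega) h)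
  · exact not_nonempty_iff.mpr (h₃ H hH) (cast_SS (by omega) h)
  · exact not_nonempty_iff.mpr (h₄ H hH) (cast_WM (by omega) h)
  · exact not_nonempty_iff.mpr (h₅ H hH) (cast_TP (by omega) h)
  · exact not_nonempty_iff.mpr (h₆ H hH) (cast_WP (by omega) h)
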